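/- Under the stated setup with 0 < δ₀ < ψ̃, for every q ∈ [0, q₀] one has ∫ ψ dμ_q < ψ̃ + δ₀/2. -/

import Mathlib

open MeasureTheory Real ENNReal

namespace SFT

/-- The one-sided subshift of finite type determined by the 0-1 matrix `A`. -/
def Space {s₀ : ℕ} (A : Matrix (Fin s₀) (Fin s₀) ℕ) : Type :=
  {ξ : ℕ → Fin s₀ // ∀ i, A (ξ i) (ξ (i + 1)) = 1}

variable {s₀ : ℕ} {A : Matrix (Fin s₀) (Fin s₀) ℕ}

instance : TopologicalSpace (Space A) :=
  inferInstanceAs (TopologicalSpace {ξ : ℕ → Fin s₀ // ∀ i, A (ξ i) (ξ (i + 1)) = 1})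

noncomputable instance : MeasurableSpace (Space A) := borel _
instance : BorelSpace (Space A) := ⟨rfl⟩

/-- The shift map σ. -/
def shift (x : Space A) : Space A := ⟨fun i => x.1 (i + 1), fun i => x.2 (i + 1)⟩

/-- `var_k g` as an extended real. -/
noncomputable def evar (g : Space A → ℝ) (k : ℕ) : ℝ≥0∞ :=
  ⨆ (ξ : Space A) (η : Space A) (_ : ∀ i ≤ k, ξ.1 i = η.1 i), ENNReal.ofReal |g ξ - g η|

/-- `|g|_θ` as an extended real. -/
noncomputable def eHolder (θ : ℝ) (g : Space A → ℝ) : ℝ≥0∞ :=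
  ⨆ k : ℕ, evar g k / ENNReal.ofReal (θ ^ k)

/-- `|g|_∞` as an extended real. -/
noncomputable def eSup (g : Space A → ℝ) : ℝ≥0∞ :=
  ⨆ ξ : Space A, ENNReal.ofReal |g ξ|

/-- `|g|_θ`. -/
noncomputable def holderNorm (θ : ℝ) (g : Space A → ℝ) : ℝ := (eHolder θ g).toReal

/-- `|g|_∞`. -/
noncomputable def supNorm (g : Space A → ℝ) : ℝ := (eSup g).toReal

/-- `‖g‖_θ = |g|_θ + |g|_∞`. -/
noncomputable def fNorm (θ : ℝ) (g : Space A → ℝ) : ℝ := holderNorm θ g + supNorm g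

/-- Membership in `F_θ(Σ_A⁺)`: finiteness of `‖g‖_θ`. -/
def MemF (θ : ℝ) (g : Space A → ℝ) : Prop := eHolder θ g + eSup g < ⊤


instance shiftFiberFinite (x : Space A) : Finite {y : Space A // shift y = x} := by
  apply Finite.of_injective (fun y : {y : Space A // shift y = x} => y.1.1 0)
  rintro ⟨y, hy⟩ ⟨z, hz⟩ h
  apply Subtype.ext
  apply Subtype.ext
  funext n
  cases n with
  | zero => exact h
  | succ i =>
    have h1 : y.1 (i + 1) = x.1 i := congrFun (congrArg Subtype.val hy) i
    have h2 : z.1 (i + 1) = x.1 i := congrFun (congrArg Subtype.val hz) i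
    rw [h1, h2]

/-- The Ruelle transfer operator `(L_f g)(x) = Σ_{σ y = x} e^{f(y)} g(y)`. -/
noncomputable def transfer (f g : Space A → ℝ) (x : Space A) : ℝ :=
  ∑' y : {y : Space A // shift y = x}, Real.exp (f y.1) * g y.1

/-- Two functions are cohomologous if they differ by a continuous coboundary. -/
def Cohomologous (u v : Space A → ℝ) : Prop :=
  ∃ w : Space A → ℝ, Continuous w ∧ ∀ x, u x = v x + w (shift x) - w x

/-- ψ is cohomologous to a constant. -/
def CohomToConst (ψ : Space A → ℝ) : Prop := ∃ c : ℝ, Cohomologous ψ fun _ => c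

/-- A finite measurable partition of the space. -/
def IsPartition {k : ℕ} (P : Fin k → Set (Space A)) : Prop :=
  (∀ i, MeasurableSet (P i)) ∧ (Pairwise fun i j => Disjoint (P i) (P j)) ∧
    (⋃ i, P i) = Set.univ

/-- Entropy of the n-th join `⋁_{j<n} σ^{-j} P` of a partition. -/
noncomputable def joinEntropy (m : Measure (Space A)) {k : ℕ} (P : Fin k → Set (Space A))
    (n : ℕ) : ℝ :=
  ∑ a : Fin n → Fin k,
    Real.negMulLog (m (⋂ j : Fin n, shift^[(j : ℕ)] ⁻¹' P (a j))).toReal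

/-- Measure-theoretic (Kolmogorov–Sinai) entropy of `m` with respect to the shift. -/
noncomputable def entropy (m : Measure (Space A)) : ℝ :=
  sSup {h | ∃ k : ℕ, ∃ P : Fin k → Set (Space A), IsPartition P ∧
    h = ⨅ n : ℕ, joinEntropy m P (n + 1) / (n + 1)}

/-- σ-invariance of a measure. -/
def IsInvariant (m : Measure (Space A)) : Prop := m.map shift = m

/-- Topological pressure via the variational principle. -/
noncomputable def pressure (g : Space A → ℝ) : ℝ :=
  sSup {r | ∃ m : Measure (Space A), IsProbabilityMeasure m ∧ IsInvariant m ∧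
    r = entropy m + ∫ x, g x ∂m}

/-- `m` is an equilibrium state of `g`. -/
def IsEqm (g : Space A → ℝ) (m : Measure (Space A)) : Prop :=
  IsProbabilityMeasure m ∧ IsInvariant m ∧ entropy m + ∫ x, g x ∂m = pressure g

/-- The Ruelle–Perron–Frobenius data of `f`: an eigenvalue `lam > 0`, a probability
eigenmeasure `ν` of the dual operator, and a positive normalised eigenfunction `h ∈ F_θ`. -/
def IsRPF (θ : ℝ) (f : Space A → ℝ) (lam : ℝ) (ν : Measure (Space A))
    (h : Space A → ℝ) : Prop :=
  0 < lam ∧ IsProbabilityMeasure ν ∧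
    (∀ g : Space A → ℝ, Continuous g → ∫ x, transfer f g x ∂ν = lam * ∫ x, g x ∂ν) ∧
    MemF θ h ∧ (∀ x, 0 < h x) ∧ (∀ x, transfer f h x = lam * h x) ∧ (∫ x, h x ∂ν) = 1



lemma transfer_mono {f u v : Space A → ℝ} (h : ∀ y, u y ≤ v y) (x : Space A) :
    transfer f u x ≤ transfer f v x :=
  Summable.tsum_le_tsum (fun y => mul_le_mul_of_nonneg_left (h y.1) (Real.exp_pos _).le)
    Summable.of_finite Summable.of_finite

lemma transfer_nonneg {f u : Space A → ℝ} (h : ∀ y, 0 ≤ u y) (x : Space A) :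
    0 ≤ transfer f u x :=
  tsum_nonneg fun y => mul_nonneg (Real.exp_pos _).le (h y.1)

lemma transfer_const_mul (f u : Space A → ℝ) (c : ℝ) (x : Space A) :
    transfer f (fun y => c * u y) x = c * transfer f u x := by
  unfold transfer
  rw [← tsum_mul_left]
  exact tsum_congr fun y => by ring

lemma transfer_shift_mul (f u v : Space A → ℝ) (x : Space A) :
    transfer f (fun y => v (shift y) * u y) x = v x * transfer f u x := by
  unfold transfer
  rw [← tsum_mul_left]
  refine tsum_congr fun y => ?_
  show Real.exp (f y.1) * (v (shift y.1) * u y.1) = v x * (Real.exp (f y.1) * u y.1)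
  rw [y.2]; ring

lemma transfer_add_exp (f w g : Space A → ℝ) (x : Space A) :
    transfer (fun y => f y + w y) g x = transfer f (fun y => Real.exp (w y) * g y) x :=
  tsum_congr fun y => by rw [Real.exp_add]; ring

/-- Birkhoff sum. -/
noncomputable def birk (ψ : Space A → ℝ) (n : ℕ) (x : Space A) : ℝ :=
  ∑ k ∈ Finset.range n, ψ (shift^[k] x)

lemma birk_succ' (ψ : Space A → ℝ) (n : ℕ) (x : Space A) :
    birk ψ (n + 1) x = birk ψ n (shift x) + ψ x := by
  unfold birk
  rw [Finset.sum_range_succ']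
  simp [Function.iterate_succ_apply]

lemma birk_nonneg {ψ : Space A → ℝ} (h : ∀ x, 0 ≤ ψ x) (n : ℕ) (x : Space A) :
    0 ≤ birk ψ n x :=
  Finset.sum_nonneg fun _ _ => h _

lemma birk_le {ψ : Space A → ℝ} {S : ℝ} (h : ∀ x, ψ x ≤ S) (n : ℕ) (x : Space A) :
    birk ψ n x ≤ n * S := by
  calc birk ψ n x ≤ ∑ _k ∈ Finset.range n, S := Finset.sum_le_sum fun _ _ => h _
    _ = n * S := by simp [mul_comm]

lemma iterate_transfer_eq (φ ψ : Space A → ℝ) (q : ℝ) (n : ℕ) (g : Space A → ℝ) :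
    (transfer (fun y => φ y + q * ψ y))^[n] g
      = (transfer φ)^[n] (fun y => Real.exp (q * birk ψ n y) * g y) := by
  induction n generalizing g with
  | zero => simp [birk]
  | succ n ih =>
    rw [Function.iterate_succ_apply, ih, Function.iterate_succ_apply]
    congr 1
    funext x
    have h1 : transfer (fun y => φ y + q * ψ y) g x
        = transfer φ (fun y => Real.exp (q * ψ y) * g y) x := transfer_add_exp φ _ g x
    have h2 := transfer_shift_mul φ (fun y => Real.exp (q * ψ y) * g y)
      (fun z => Real.exp (q * birk ψ n z)) x
    calc Real.exp (q * birk ψ n x) * transfer (fun y => φ y + q * ψ y) g x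
        = Real.exp (q * birk ψ n x) * transfer φ (fun y => Real.exp (q * ψ y) * g y) x := by
          rw [h1]
      _ = transfer φ (fun y => Real.exp (q * birk ψ n (shift y))
            * (Real.exp (q * ψ y) * g y)) x := h2.symm
      _ = transfer φ (fun y => Real.exp (q * birk ψ (n + 1) y) * g y) x := by
          refine tsum_congr fun y => ?_
          show Real.exp (φ y.1) * (Real.exp (q * birk ψ n (shift y.1))
              * (Real.exp (q * ψ y.1) * g y.1))
            = Real.exp (φ y.1) * (Real.exp (q * birk ψ (n + 1) y.1) * g y.1)
          rw [birk_succ', mul_add q, Real.exp_add]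
          ring

lemma iterate_transfer_mono (f : Space A → ℝ) (n : ℕ) {u v : Space A → ℝ}
    (h : ∀ y, u y ≤ v y) (x : Space A) :
    (transfer f)^[n] u x ≤ (transfer f)^[n] v x := by
  induction n generalizing u v with
  | zero => exact h x
  | succ n ih =>
    rw [Function.iterate_succ_apply, Function.iterate_succ_apply]
    exact ih (u := transfer f u) (v := transfer f v) (fun y => transfer_mono h y)

lemma iterate_transfer_const_mul (f u : Space A → ℝ) (c : ℝ) (n : ℕ) :
    (transfer f)^[n] (fun y => c * u y) = fun x => c * (transfer f)^[n] u x := by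
  induction n generalizing u with
  | zero => rfl
  | succ n ih =>
    rw [Function.iterate_succ_apply, Function.iterate_succ_apply]
    have : transfer f (fun y => c * u y) = fun y => c * transfer f u y := by
      funext x; exact transfer_const_mul f u c x
    rw [this, ih]

lemma iterate_transfer_nonneg {f u : Space A → ℝ} (h : ∀ y, 0 ≤ u y) (n : ℕ) (x : Space A) :
    0 ≤ (transfer f)^[n] u x := by
  induction n generalizing u with
  | zero => exact h x
  | succ n ih =>
    rw [Function.iterate_succ_apply]
    exact ih (u := transfer f u) (fun y => transfer_nonneg h y)

lemma iterate_transfer_one {φ : Space A → ℝ}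
    (hL1 : transfer φ (fun _ => 1) = fun _ => 1) (n : ℕ) :
    (transfer φ)^[n] (fun _ => 1) = fun _ => (1 : ℝ) := by
  induction n with
  | zero => rfl
  | succ n ih => rw [Function.iterate_succ_apply, hL1, ih]


lemma eSup_le_ofReal {g : Space A → ℝ} {c : ℝ} (h : ∀ x, |g x| ≤ c) :
    eSup g ≤ ENNReal.ofReal c :=
  iSup_le fun x => ENNReal.ofReal_le_ofReal (h x)

lemma abs_le_supNorm {g : Space A → ℝ} (h : eSup g ≠ ⊤) (x : Space A) :
    |g x| ≤ supNorm g := by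
  have h1 : ENNReal.ofReal |g x| ≤ eSup g := le_iSup (fun ξ => ENNReal.ofReal |g ξ|) x
  have h2 := ENNReal.toReal_mono h h1
  rwa [ENNReal.toReal_ofReal (abs_nonneg _)] at h2

lemma supNorm_nonneg (g : Space A → ℝ) : 0 ≤ supNorm g := ENNReal.toReal_nonneg

lemma holderNorm_nonneg (θ : ℝ) (g : Space A → ℝ) : 0 ≤ holderNorm θ g :=
  ENNReal.toReal_nonneg

lemma supNorm_le_fNorm (θ : ℝ) (g : Space A → ℝ) : supNorm g ≤ fNorm θ g :=
  le_add_of_nonneg_left (holderNorm_nonneg θ g)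

lemma MemF.eSup_ne_top {θ : ℝ} {g : Space A → ℝ} (h : MemF θ g) : eSup g ≠ ⊤ :=
  fun ht => absurd h (by simp [MemF, ht])

lemma MemF.eHolder_ne_top {θ : ℝ} {g : Space A → ℝ} (h : MemF θ g) : eHolder θ g ≠ ⊤ :=
  fun ht => absurd h (by simp [MemF, ht])

lemma MemF.abs_le {θ : ℝ} {g : Space A → ℝ} (h : MemF θ g) (x : Space A) :
    |g x| ≤ supNorm g := abs_le_supNorm h.eSup_ne_top x

lemma space_nonempty (h01 : ∀ i j, A i j = 0 ∨ A i j = 1) {M : ℕ} (hM : 0 < M)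
    (hap : ∀ i j, 0 < (A ^ M) i j) (hs : 0 < s₀) : Nonempty (Space A) := by
  have hex : ∀ i : Fin s₀, ∃ j, A i j = 1 := by
    intro i
    have h := hap i i
    obtain ⟨M', rfl⟩ : ∃ M', M = M' + 1 := ⟨M - 1, (Nat.succ_pred_eq_of_pos hM).symm⟩
    rw [pow_succ', Matrix.mul_apply] at h
    have hsum : ∑ j : Fin s₀, A i j * (A ^ M') j i ≠ 0 := h.ne'
    obtain ⟨k, -, hk⟩ := Finset.exists_ne_zero_of_sum_ne_zero hsum
    exact ⟨k, (h01 i k).resolve_left fun h0 => hk (by rw [h0, zero_mul])⟩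
  choose f hf using hex
  let i0 : Fin s₀ := ⟨0, hs⟩
  exact ⟨⟨fun n => f^[n] i0, fun n => by
    show A (f^[n] i0) (f^[n + 1] i0) = 1
    rw [Function.iterate_succ_apply']; exact hf _⟩⟩

lemma holder_bound {θ : ℝ} (hθ0 : 0 < θ) {g : Space A → ℝ} (h : eHolder θ g ≠ ⊤)
    (k : ℕ) (ξ η : Space A) (hk : ∀ i ≤ k, ξ.1 i = η.1 i) :
    |g ξ - g η| ≤ holderNorm θ g * θ ^ k := by
  have h1 : ENNReal.ofReal |g ξ - g η| ≤ evar g k := by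
    refine le_iSup_of_le ξ (le_iSup_of_le η ?_)
    exact le_iSup_of_le hk le_rfl
  have h2 : evar g k ≤ eHolder θ g * ENNReal.ofReal (θ ^ k) := by
    have h3 : evar g k / ENNReal.ofReal (θ ^ k) ≤ eHolder θ g :=
      le_iSup (fun k => evar g k / ENNReal.ofReal (θ ^ k)) k
    have hne : ENNReal.ofReal (θ ^ k) ≠ 0 := by
      simp [ENNReal.ofReal_eq_zero, not_le, pow_pos hθ0 k]
    exact (ENNReal.div_le_iff_le_mul (Or.inl hne) (Or.inl ENNReal.ofReal_ne_top)).mp h3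
  have h4 : ENNReal.ofReal |g ξ - g η| ≤ ENNReal.ofReal (holderNorm θ g * θ ^ k) := by
    refine (h1.trans h2).trans_eq ?_
    simp only [holderNorm]
    rw [ENNReal.ofReal_mul ENNReal.toReal_nonneg, ENNReal.ofReal_toReal h]
  exact (ENNReal.ofReal_le_ofReal_iff
    (mul_nonneg (holderNorm_nonneg θ g) (pow_pos hθ0 k).le)).mp h4

lemma continuous_of_eHolder {θ : ℝ} (hθ0 : 0 < θ) (hθ1 : θ < 1) {g : Space A → ℝ}
    (h : eHolder θ g ≠ ⊤) : Continuous g := by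
  rw [continuous_iff_continuousAt]
  intro ξ
  rw [ContinuousAt, Metric.tendsto_nhds]
  intro ε hε
  obtain ⟨k, hk⟩ : ∃ k : ℕ, holderNorm θ g * θ ^ k < ε := by
    have h1 : Filter.Tendsto (fun k : ℕ => holderNorm θ g * θ ^ k) Filter.atTop (nhds 0) := by
      have := tendsto_pow_atTop_nhds_zero_of_lt_one hθ0.le hθ1
      simpa using this.const_mul (holderNorm θ g)
    exact (h1.eventually (gt_mem_nhds hε)).exists
  have hU : (⋂ i ∈ Finset.range (k + 1), {η : Space A | η.1 i = ξ.1 i}) ∈ nhds ξ := by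
    refine (Filter.biInter_finset_mem _).mpr fun i _ => ?_
    refine IsOpen.mem_nhds ?_ rfl
    have hc : Continuous fun η : Space A => η.1 i :=
      (continuous_apply i).comp continuous_subtype_val
    exact (isOpen_discrete {ξ.1 i}).preimage hc
  filter_upwards [hU] with η hη
  rw [Real.dist_eq]
  have hη' : ∀ i ≤ k, η.1 i = ξ.1 i := fun i hi =>
    Set.mem_iInter₂.mp hη i (Finset.mem_range_succ_iff.mpr hi)
  exact lt_of_le_of_lt (holder_bound hθ0 h k η ξ hη') hk

lemma compactSpace_space : CompactSpace (Space A) := by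
  have hc : IsClosed {ξ : ℕ → Fin s₀ | ∀ i, A (ξ i) (ξ (i + 1)) = 1} := by
    have he : {ξ : ℕ → Fin s₀ | ∀ i, A (ξ i) (ξ (i + 1)) = 1}
        = ⋂ i, {ξ : ℕ → Fin s₀ | A (ξ i) (ξ (i + 1)) = 1} := by
      ext ξ; simp
    rw [he]
    refine isClosed_iInter fun i => ?_
    have hcont : Continuous fun ξ : ℕ → Fin s₀ => (ξ i, ξ (i + 1)) :=
      (continuous_apply i).prodMk (continuous_apply (i + 1))
    exact (isClosed_discrete {p : Fin s₀ × Fin s₀ | A p.1 p.2 = 1}).preimage hcont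
  exact isCompact_iff_compactSpace.mp hc.isCompact

lemma integrable_of_continuous (m : Measure (Space A)) [IsFiniteMeasure m]
    {g : Space A → ℝ} (hg : Continuous g) : Integrable g m := by
  haveI : CompactSpace (Space A) := compactSpace_space
  have hsupp : HasCompactSupport g :=
    IsCompact.of_isClosed_subset isCompact_univ (isClosed_tsupport g) (Set.subset_univ _)
  exact hg.integrable_of_hasCompactSupport hsupp


/-- Prepend a symbol to a sequence. -/
def consFun (i : Fin s₀) (x : Space A) (h : A i (x.1 0) = 1) : Space A :=
  ⟨fun n => Nat.casesOn n i fun k => x.1 k, fun n => by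
    cases n with
    | zero => exact h
    | succ k => exact x.2 k⟩

lemma shift_consFun (i : Fin s₀) (x : Space A) (h : A i (x.1 0) = 1) :
    shift (consFun i x h) = x := rfl

open Classical in
lemma transfer_eq_sum_fin (f g : Space A → ℝ) (x : Space A) :
    transfer f g x = ∑ i : Fin s₀,
      if h : A i (x.1 0) = 1 then
        Real.exp (f (consFun i x h)) * g (consFun i x h) else 0 := by
  classical
  let e : {y : Space A // shift y = x} ≃ {i : Fin s₀ // A i (x.1 0) = 1} :=
    { toFun := fun y => ⟨y.1.1 0, by
        have h1 : y.1.1 1 = x.1 0 := congrFun (congrArg Subtype.val y.2) 0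
        have := y.1.2 0
        rwa [h1] at this⟩
      invFun := fun i => ⟨consFun i.1 x i.2, shift_consFun _ _ _⟩
      left_inv := fun y => by
        apply Subtype.ext; apply Subtype.ext; funext n
        cases n with
        | zero => rfl
        | succ k => exact (congrFun (congrArg Subtype.val y.2) k).symm
      right_inv := fun i => rfl }
  unfold transfer
  rw [← Equiv.tsum_eq e.symm (fun y => Real.exp (f y.1) * g y.1), tsum_fintype]
  have hstep : ∀ i : {i : Fin s₀ // A i (x.1 0) = 1},
      Real.exp (f (e.symm i).1) * g (e.symm i).1
        = if h : A i.1 (x.1 0) = 1 then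
            Real.exp (f (consFun i.1 x h)) * g (consFun i.1 x h) else 0 := by
    intro i
    rw [dif_pos i.2]
    rfl
  rw [Finset.sum_congr rfl fun i _ => hstep i]
  rw [← Finset.sum_subtype (Finset.univ.filter fun i : Fin s₀ => A i (x.1 0) = 1)
    (by intro i; simp) (fun i : Fin s₀ =>
      if h : A i (x.1 0) = 1 then
        Real.exp (f (consFun i x h)) * g (consFun i x h) else 0)]
  rw [Finset.sum_filter]
  refine Finset.sum_congr rfl fun i _ => ?_
  by_cases h : A i (x.1 0) = 1
  · rw [if_pos h]
  · rw [if_neg h, dif_neg h]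

lemma continuous_transfer {f g : Space A → ℝ} (hf : Continuous f) (hg : Continuous g) :
    Continuous (transfer f g) := by
  classical
  have heq : transfer f g = fun x => ∑ i : Fin s₀,
      if h : A i (x.1 0) = 1 then
        Real.exp (f (consFun i x h)) * g (consFun i x h) else 0 := by
    funext x; exact transfer_eq_sum_fin f g x
  rw [heq]
  refine continuous_finset_sum _ fun i _ => ?_
  set U : Set (Space A) := {x | A i (x.1 0) = 1} with hU
  have hcoord : Continuous fun x : Space A => x.1 0 :=
    (continuous_apply 0).comp continuous_subtype_val
  have hUopen : IsOpen U := (isOpen_discrete {c : Fin s₀ | A i c = 1}).preimage hcoord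
  have hUclosed : IsClosed U := (isClosed_discrete {c : Fin s₀ | A i c = 1}).preimage hcoord
  rw [continuous_iff_continuousAt]
  intro x
  by_cases hx : x ∈ U
  · -- continuous near x via the cons map on U
    have hconsU : Continuous fun z : U => consFun i z.1 z.2 := by
      refine Continuous.subtype_mk ?_ _
      refine continuous_pi fun n => ?_
      cases n with
      | zero => exact continuous_const
      | succ k =>
        exact (continuous_apply k).comp (continuous_subtype_val.comp continuous_subtype_val)
    have hrestr : ContinuousOn (fun x : Space A =>
        if h : A i (x.1 0) = 1 then
          Real.exp (f (consFun i x h)) * g (consFun i x h) else 0) U := by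
      rw [continuousOn_iff_continuous_restrict]
      have : (U.domRestrict fun x : Space A =>
          if h : A i (x.1 0) = 1 then
            Real.exp (f (consFun i x h)) * g (consFun i x h) else 0)
          = fun z : U => Real.exp (f (consFun i z.1 z.2)) * g (consFun i z.1 z.2) := by
        funext z
        simp only [Set.domRestrict_apply]
        exact dif_pos (show A i ((z : Space A).1 0) = 1 from z.2)
      rw [this]
      exact ((hf.comp hconsU).rexp).mul (hg.comp hconsU)
    exact hrestr.continuousAt (hUopen.mem_nhds hx)
  · have hrestr : ContinuousOn (fun x : Space A =>
        if h : A i (x.1 0) = 1 then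
          Real.exp (f (consFun i x h)) * g (consFun i x h) else 0) Uᶜ := by
      rw [continuousOn_iff_continuous_restrict]
      have : (Uᶜ.domRestrict fun x : Space A =>
          if h : A i (x.1 0) = 1 then
            Real.exp (f (consFun i x h)) * g (consFun i x h) else 0)
          = fun _ => (0 : ℝ) := by
        funext z
        simp only [Set.domRestrict_apply]
        exact dif_neg (show ¬ A i ((z : Space A).1 0) = 1 from z.2)
      rw [this]
      exact continuous_const
    exact hrestr.continuousAt (hUclosed.isOpen_compl.mem_nhds hx)


-- ######## numeric core ########
lemma numeric (E R C d p : ℝ) (hE1 : 1 ≤ E) (hA : 100*C*(E-1) ≤ d) (hR0 : 0 ≤ R)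
    (hB : 16*C*R ≤ d) (hC2 : 2 ≤ C) (hd : 0 < d) (hdp : d < p) (hpc : 2*p ≤ C) :
    (E+R)*(E*(p + C*R)) < p + d/2 := by
  have hC0 : 0 < C := by linarith
  have hp0 : 0 < p := lt_trans hd hdp
  set t := d/C with hts
  have ht0 : 0 ≤ t := by positivity
  have ht : t ≤ 1/2 := by rw [hts, div_le_iff₀ hC0]; linarith
  have hE2 : E ≤ 1 + t/100 := by
    have h1 : t/100 = d/(100*C) := by rw [hts]; ring
    have h2 : E - 1 ≤ d/(100*C) := by
      rw [le_div_iff₀ (by linarith : (0:ℝ) < 100*C)]; nlinarith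
    linarith [h1 ▸ h2]
  have hRt : R ≤ t/16 := by
    have h1 : t/16 = d/(16*C) := by rw [hts]; ring
    have h2 : R ≤ d/(16*C) := by
      rw [le_div_iff₀ (by linarith : (0:ℝ) < 16*C)]; nlinarith
    linarith [h1 ▸ h2]
  have hCR : C*R ≤ d/16 := by rw [le_div_iff₀ (by norm_num : (0:ℝ) < 16)]; linarith
  have htp : t*p ≤ d/2 := by
    rw [hts, div_mul_eq_mul_div, div_le_div_iff₀ hC0 (by norm_num : (0:ℝ) < 2)]
    nlinarith
  have htd : t*d ≤ d/2 := by nlinarith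
  have hEb : E ≤ 201/200 := by linarith
  have hEp : E*p ≤ p + t*p/100 := by nlinarith
  have hECR : E*(C*R) ≤ (201/200)*(d/16) :=
    mul_le_mul hEb hCR (by positivity) (by norm_num)
  have hX : E*(p + C*R) ≤ p + (17/200)*d := by nlinarith
  have hX0 : 0 ≤ E*(p + C*R) := by positivity
  have htX : t*(E*(p + C*R)) ≤ d/2 + (17/200)*(d/2) := by
    nlinarith [mul_le_mul_of_nonneg_left hX ht0]
  have hER : E + R ≤ 1 + t*(29/400) := by linarith
  have hfin : (E+R)*(E*(p + C*R)) ≤ (1 + t*(29/400))*(E*(p + C*R)) :=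
    mul_le_mul_of_nonneg_right hER hX0
  nlinarith [hfin, htX, hX]


lemma exp_le_one_add_two (x : ℝ) (h0 : 0 ≤ x) (h : x ≤ 1/2) : Real.exp x ≤ 1 + 2*x := by
  have h1 : Real.exp x ≤ 1/(1-x) := by
    rw [le_div_iff₀ (by linarith)]
    have h2 : 1 - x ≤ Real.exp (-x) := by have := Real.add_one_le_exp (-x); linarith
    calc Real.exp x * (1 - x) ≤ Real.exp x * Real.exp (-x) :=
          mul_le_mul_of_nonneg_left h2 (Real.exp_pos x).le
      _ = 1 := by rw [← Real.exp_add]; simp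
  have h3 : 1/(1-x) ≤ 1 + 2*x := by
    rw [div_le_iff₀ (by linarith)]; nlinarith
  linarith

-- ######## main proof ########
set_option maxHeartbeats 1000000 in
theorem statement14
    {s₀ M : ℕ} {A : Matrix (Fin s₀) (Fin s₀) ℕ} {θ : ℝ}
    (hs₀ : 2 ≤ s₀) (h01 : ∀ i j, A i j = 0 ∨ A i j = 1) (hM : 0 < M)
    (hap : ∀ i j, 0 < (A ^ M) i j) (hθ0 : 0 < θ) (hθ1 : θ < 1)
    (φ ψ : Space A → ℝ) (hφ : MemF θ φ) (hψ : MemF θ ψ)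
    (hL1 : transfer φ (fun _ => 1) = fun _ => 1) (hψ0 : ∀ x, 0 ≤ ψ x)
    (hcoh : ¬ CohomToConst ψ)
    (μ : Measure (Space A)) (hμ : IsEqm φ μ) (ψt : ℝ) (hψt : ψt = ∫ x, ψ x ∂μ)
    (b C₀ : ℝ) (hb : b = max 1 (holderNorm θ ψ))
    (hC₀ : C₀ = fNorm θ φ + 2 * max (supNorm ψ) 1)
    (lam : ℝ → ℝ) (ν : ℝ → Measure (Space A)) (hq : ℝ → Space A → ℝ)
    (hRPF : ∀ q : ℝ, IsRPF θ (fun x => φ x + q * ψ x) (lam q) (ν q) (hq q))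
    (D ρ : ℝ) (hD1 : 1 ≤ D) (hρ : ρ ∈ Set.Ioo (0:ℝ) 1)
    (hgap : ∀ q : ℝ, |q| ≤ 1 / b → ∀ g : Space A → ℝ, MemF θ g → ∀ n : ℕ,
      fNorm θ (fun x => (transfer (fun y => φ y + q * ψ y))^[n] g x / lam q ^ n
          - hq q x * ∫ y, g y ∂(ν q)) ≤ D * ρ ^ n * fNorm θ g)
    (hLψ : ∀ n : ℕ, supNorm (fun x => (transfer φ)^[n] ψ x - ψt) ≤ C₀ * D * ρ ^ n)
    (α : ℝ) (hα : 0 < α) (hαρ : max ρ θ = Real.exp (-α))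
    (δ₀ : ℝ) (hδ₀ : 0 < δ₀) (hδψ : δ₀ < ψt)
    (n₀ : ℕ)
    (hn₀ : (n₀ : ℝ) - 1 ≤ (1 / α) * |Real.log (δ₀ / (16 * C₀ * D))| ∧
      (1 / α) * |Real.log (δ₀ / (16 * C₀ * D))| < n₀)
    (q₀ : ℝ) (hq₀ : q₀ = min (δ₀ / (100 * C₀ ^ 2 * n₀)) (1 / b))
    :
    ∀ q ∈ Set.Icc (0 : ℝ) q₀,
      (∫ x, ψ x ∂((ν q).withDensity fun x => ENNReal.ofReal (hq q x))) < ψt + δ₀ / 2 := by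
  intro q hqI
  obtain ⟨hq0, hqq₀⟩ := hqI
  classical
  haveI : CompactSpace (Space A) := compactSpace_space
  haveI hνP : IsProbabilityMeasure (ν q) := (hRPF q).2.1
  haveI hμP : IsProbabilityMeasure μ := hμ.1
  have hφc : Continuous φ := continuous_of_eHolder hθ0 hθ1 hφ.eHolder_ne_top
  have hψc : Continuous ψ := continuous_of_eHolder hθ0 hθ1 hψ.eHolder_ne_top
  have hhqMemF : MemF θ (hq q) := (hRPF q).2.2.2.1
  have hhqc : Continuous (hq q) := continuous_of_eHolder hθ0 hθ1 hhqMemF.eHolder_ne_top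
  have hqpos : ∀ x, 0 < hq q x := (hRPF q).2.2.2.2.1
  have hfc : Continuous fun y => φ y + q * ψ y := hφc.add (continuous_const.mul hψc)
  have hlampos : 0 < lam q := (hRPF q).1
  obtain ⟨x₀⟩ : Nonempty (Space A) := space_nonempty h01 hM hap (by omega)
  set S := supNorm ψ with hSdef
  have hψle : ∀ x, ψ x ≤ S := fun x => (le_abs_self _).trans (hψ.abs_le x)
  have hS0 : 0 ≤ S := supNorm_nonneg ψ
  have hfNφ : 0 ≤ fNorm θ φ :=
    add_nonneg (holderNorm_nonneg θ φ) (supNorm_nonneg φ)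
  have hC₀2 : 2 ≤ C₀ := by
    rw [hC₀]
    have h1 : (1:ℝ) ≤ max S 1 := le_max_right _ _
    linarith
  have hC₀pos : (0:ℝ) < C₀ := by linarith
  have hSC : S ≤ C₀ / 2 := by
    rw [hC₀]
    have h1 : S ≤ max S 1 := le_max_left _ _
    linarith
  have hψt0 : 0 < ψt := lt_trans hδ₀ hδψ
  have hψtS : ψt ≤ S := by
    rw [hψt]
    calc ∫ x, ψ x ∂μ ≤ ∫ _x, S ∂μ :=
          integral_mono (integrable_of_continuous μ hψc) (integrable_const S) hψle
      _ = S := by simp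
  have hpc : 2 * ψt ≤ C₀ := by linarith
  have hD0 : (0:ℝ) < D := by linarith
  have hn₀pos : 0 < n₀ := by
    by_contra hcon
    have h0 : n₀ = 0 := by omega
    have h2 := hn₀.2
    rw [h0] at h2
    have h3 : 0 ≤ (1 / α) * |Real.log (δ₀ / (16 * C₀ * D))| :=
      mul_nonneg (by positivity) (abs_nonneg _)
    push_cast at h2
    linarith
  have hn₀R : (0:ℝ) < (n₀ : ℝ) := by exact_mod_cast hn₀pos
  have hxpos : (0:ℝ) < δ₀ / (16 * C₀ * D) := by positivity
  have hδC : δ₀ / (16 * C₀ * D) ≤ 1 := by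
    rw [div_le_one (by positivity)]
    nlinarith
  have hlogle : |Real.log (δ₀ / (16 * C₀ * D))| < α * n₀ := by
    have h2 := hn₀.2
    have h3 := (mul_lt_mul_iff_right₀ hα).mpr h2
    rwa [← mul_assoc, mul_one_div, div_self hα.ne', one_mul] at h3
  have hρn₀ : ρ ^ n₀ ≤ δ₀ / (16 * C₀ * D) := by
    have h1 : ρ ≤ Real.exp (-α) := by
      rw [← hαρ]; exact le_max_left _ _
    have h2 : ρ ^ n₀ ≤ Real.exp (-α) ^ n₀ := pow_le_pow_left₀ hρ.1.le h1 n₀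
    have h3 : Real.exp (-α) ^ n₀ = Real.exp (-(α * n₀)) := by
      rw [← Real.exp_nat_mul]; ring_nf
    have h4 : Real.log (δ₀ / (16 * C₀ * D)) ≤ 0 := Real.log_nonpos hxpos.le hδC
    have h5 : -(α * n₀) < Real.log (δ₀ / (16 * C₀ * D)) := by
      rw [abs_of_nonpos h4] at hlogle
      linarith
    have h6 : Real.exp (-(α * n₀)) ≤ δ₀ / (16 * C₀ * D) := by
      rw [← Real.exp_log hxpos]
      exact (Real.exp_lt_exp.mpr h5).le
    calc ρ ^ n₀ ≤ Real.exp (-α) ^ n₀ := h2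
      _ = Real.exp (-(α * n₀)) := h3
      _ ≤ δ₀ / (16 * C₀ * D) := h6
  set R := D * ρ ^ n₀ with hRdef
  have hR0 : 0 ≤ R := mul_nonneg hD0.le (pow_nonneg hρ.1.le n₀)
  have hB : 16 * C₀ * R ≤ δ₀ := by
    rw [hRdef]
    calc 16 * C₀ * (D * ρ ^ n₀) ≤ 16 * C₀ * (D * (δ₀ / (16 * C₀ * D))) := by
          have := mul_le_mul_of_nonneg_left hρn₀ hD0.le
          nlinarith
      _ = δ₀ := by
          rw [show (16:ℝ) * C₀ * (D * (δ₀ / (16 * C₀ * D))) = (16 * C₀ * D) * (δ₀ / (16 * C₀ * D)) by ring,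
            mul_div_cancel₀ _ (by positivity : (16:ℝ) * C₀ * D ≠ 0)]
  set E := Real.exp (q * (n₀ * S)) with hEdef
  have hqnS0 : 0 ≤ q * (n₀ * S) := mul_nonneg hq0 (mul_nonneg hn₀R.le hS0)
  have hE1 : 1 ≤ E := Real.one_le_exp hqnS0
  have hq₀1 : q₀ ≤ δ₀ / (100 * C₀ ^ 2 * n₀) := by rw [hq₀]; exact min_le_left _ _
  have hqnS : q * (n₀ * S) ≤ δ₀ / (200 * C₀) := by
    calc q * (n₀ * S) ≤ (δ₀ / (100 * C₀ ^ 2 * n₀)) * (n₀ * (C₀ / 2)) := by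
          apply mul_le_mul (le_trans hqq₀ hq₀1)
            (mul_le_mul_of_nonneg_left hSC hn₀R.le)
            (mul_nonneg hn₀R.le hS0) (by positivity)
      _ = δ₀ / (200 * C₀) := by
          rw [div_mul_eq_mul_div, div_eq_div_iff (by positivity) (by positivity)]
          ring
  have hqnShalf : q * (n₀ * S) ≤ 1 / 2 := by
    have h1 : δ₀ / (200 * C₀) ≤ 1 / 2 := by
      rw [div_le_div_iff₀ (by positivity) (by norm_num)]
      linarith
    linarith
  have hA200 : 200 * C₀ * (q * (n₀ * S)) ≤ δ₀ := by
    calc 200 * C₀ * (q * (n₀ * S)) ≤ 200 * C₀ * (δ₀ / (200 * C₀)) :=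
          mul_le_mul_of_nonneg_left hqnS (by positivity)
      _ = δ₀ := mul_div_cancel₀ _ (by positivity : (200:ℝ) * C₀ ≠ 0)
  have hA : 100 * C₀ * (E - 1) ≤ δ₀ := by
    have hexp : E ≤ 1 + 2 * (q * (n₀ * S)) := exp_le_one_add_two _ hqnS0 hqnShalf
    nlinarith
  have hqb : |q| ≤ 1 / b := by
    rw [abs_of_nonneg hq0]
    exact le_trans hqq₀ (hq₀ ▸ min_le_right _ _)
  -- MemF and fNorm of the constant function 1
  have heH1 : eHolder θ (fun _ : Space A => (1:ℝ)) = 0 := by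
    refine le_antisymm (iSup_le fun k => ?_) zero_le
    have hv : evar (fun _ : Space A => (1:ℝ)) k = 0 := by
      refine le_antisymm (iSup_le fun ξ => iSup_le fun η => iSup_le fun _ => ?_) zero_le
      simp
    rw [hv, ENNReal.zero_div]
  have heS1 : eSup (fun _ : Space A => (1:ℝ)) = ENNReal.ofReal 1 := by
    refine le_antisymm (eSup_le_ofReal fun x => by norm_num) ?_
    refine le_iSup_of_le x₀ ?_
    norm_num
  have hMemF1 : MemF θ (fun _ : Space A => (1:ℝ)) := by
    rw [MemF, heH1, zero_add, heS1]
    exact ENNReal.ofReal_lt_top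
  have hf1 : fNorm θ (fun _ : Space A => (1:ℝ)) = 1 := by
    simp only [fNorm, holderNorm, supNorm]
    rw [heH1, heS1]
    simp
  -- bounds on iterates applied to 1
  have hiter1 : ∀ n : ℕ, ∀ x, 1 ≤ (transfer (fun y => φ y + q * ψ y))^[n] (fun _ => 1) x ∧
      (transfer (fun y => φ y + q * ψ y))^[n] (fun _ => 1) x ≤ Real.exp (q * (n * S)) := by
    intro n x
    have he := iterate_transfer_eq φ ψ q n (fun _ => 1)
    constructor
    · have h1 : ∀ y : Space A, (fun _ : Space A => (1:ℝ)) y ≤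
          (fun y => Real.exp (q * birk ψ n y) * (fun _ : Space A => (1:ℝ)) y) y := by
        intro y
        simp only [mul_one]
        exact Real.one_le_exp (mul_nonneg hq0 (birk_nonneg hψ0 n y))
      have h2 := iterate_transfer_mono φ n h1 x
      rw [iterate_transfer_one hL1] at h2
      rw [he]
      exact h2
    · have h1 : ∀ y : Space A, (fun y => Real.exp (q * birk ψ n y) *
          (fun _ : Space A => (1:ℝ)) y) y ≤
          (fun y => Real.exp (q * (n * S)) * (fun _ : Space A => (1:ℝ)) y) y := by
        intro y
        simp only [mul_one]
        exact Real.exp_le_exp.mpr (mul_le_mul_of_nonneg_left (birk_le hψle n y) hq0)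
      have h2 := iterate_transfer_mono φ n h1 x
      rw [iterate_transfer_const_mul φ (fun _ => 1) (Real.exp (q * (n * S))) n] at h2
      rw [iterate_transfer_one hL1] at h2
      rw [he]
      simpa using h2
  -- pointwise spectral gap for g = 1
  have habs_sub : ∀ a c : ℝ, |a - c| ≤ |a| + |c| := by
    intro a c
    calc |a - c| = |a + -c| := by ring_nf
      _ ≤ |a| + |-c| := abs_add_le _ _
      _ = |a| + |c| := by rw [abs_neg]
  have hgap1 : ∀ n : ℕ, ∀ x,
      |(transfer (fun y => φ y + q * ψ y))^[n] (fun _ => 1) x / lam q ^ n - hq q x|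
        ≤ D * ρ ^ n := by
    intro n x
    have h := hgap q hqb (fun _ => 1) hMemF1 n
    rw [hf1, mul_one] at h
    have hI1 : (∫ y, (fun _ : Space A => (1:ℝ)) y ∂(ν q)) = 1 := by simp
    rw [hI1] at h
    simp only [mul_one] at h
    have hlamn : (0:ℝ) < lam q ^ n := pow_pos hlampos n
    have hbdd : ∀ z : Space A,
        |(transfer (fun y => φ y + q * ψ y))^[n] (fun _ => 1) z / lam q ^ n - hq q z|
          ≤ Real.exp (q * (n * S)) / lam q ^ n + supNorm (hq q) := by
      intro z
      have h1 := (hiter1 n z).1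
      have h2 := (hiter1 n z).2
      have habs : |(transfer (fun y => φ y + q * ψ y))^[n] (fun _ => 1) z / lam q ^ n|
          ≤ Real.exp (q * (n * S)) / lam q ^ n := by
        rw [abs_div, abs_of_pos hlamn, abs_of_nonneg (by linarith)]
        gcongr
      have h3 := hhqMemF.abs_le z
      calc |(transfer (fun y => φ y + q * ψ y))^[n] (fun _ => 1) z / lam q ^ n - hq q z|
          ≤ |(transfer (fun y => φ y + q * ψ y))^[n] (fun _ => 1) z / lam q ^ n|
            + |hq q z| := habs_sub _ _
        _ ≤ Real.exp (q * (n * S)) / lam q ^ n + supNorm (hq q) := by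
            exact add_le_add habs h3
    have hne : eSup (fun x => (transfer (fun y => φ y + q * ψ y))^[n] (fun _ => 1) x
        / lam q ^ n - hq q x) ≠ ⊤ :=
      (lt_of_le_of_lt (eSup_le_ofReal hbdd) ENNReal.ofReal_lt_top).ne
    exact (abs_le_supNorm hne x).trans ((supNorm_le_fNorm θ _).trans h)
  -- lam q ≥ 1
  have hlam1 : 1 ≤ lam q := by
    by_contra hcon
    push_neg at hcon
    have hinv : 1 < 1 / lam q := by rw [lt_div_iff₀ hlampos]; linarith
    obtain ⟨n, hn⟩ := pow_unbounded_of_one_lt (hq q x₀ + D) hinv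
    have h1 := hgap1 n x₀
    have h2 := (hiter1 n x₀).1
    have hlamn : (0:ℝ) < lam q ^ n := pow_pos hlampos n
    have h3 : (1 / lam q) ^ n
        ≤ (transfer (fun y => φ y + q * ψ y))^[n] (fun _ => 1) x₀ / lam q ^ n := by
      rw [div_pow, one_pow]
      gcongr
    have h4 := (abs_le.mp h1).2
    have hρn : ρ ^ n ≤ 1 := pow_le_one₀ hρ.1.le hρ.2.le
    nlinarith
  have hlamn0 : 1 ≤ lam q ^ n₀ := one_le_pow₀ hlam1
  -- upper bound for hq q
  have hhqub : ∀ x, hq q x ≤ E + R := by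
    intro x
    have h1 := hgap1 n₀ x
    have h2 := (hiter1 n₀ x).2
    have h3 := (hiter1 n₀ x).1
    have h4 : (transfer (fun y => φ y + q * ψ y))^[n₀] (fun _ => 1) x / lam q ^ n₀ ≤ E := by
      rw [div_le_iff₀ (by positivity)]
      calc (transfer (fun y => φ y + q * ψ y))^[n₀] (fun _ => 1) x
          ≤ Real.exp (q * (n₀ * S)) := h2
        _ = E := by rw [hEdef]
        _ ≤ E * lam q ^ n₀ := le_mul_of_one_le_right (by positivity) hlamn0
    have h5 := (abs_le.mp h1).1
    rw [hRdef]
    linarith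
  -- iterate bounds for ψ under L_φ
  have hLφψS : ∀ z, (transfer φ)^[n₀] ψ z ≤ S := by
    intro z
    have h1 : ∀ y : Space A, ψ y ≤ (fun y => S * (fun _ : Space A => (1:ℝ)) y) y := by
      intro y; simpa using hψle y
    have h2 := iterate_transfer_mono φ n₀ h1 z
    rw [iterate_transfer_const_mul φ (fun _ => 1) S n₀, iterate_transfer_one hL1] at h2
    simpa using h2
  have hLφψbd : ∀ x, (transfer φ)^[n₀] ψ x ≤ ψt + C₀ * R := by
    intro x
    have hbdd : ∀ z : Space A, |(transfer φ)^[n₀] ψ z - ψt| ≤ S + |ψt| := by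
      intro z
      have h0 : 0 ≤ (transfer φ)^[n₀] ψ z := iterate_transfer_nonneg hψ0 n₀ z
      have h1 := hLφψS z
      have h2 := le_abs_self ψt
      have h3 := neg_abs_le ψt
      rw [abs_le]
      constructor <;> linarith
    have hne : eSup (fun x => (transfer φ)^[n₀] ψ x - ψt) ≠ ⊤ :=
      (lt_of_le_of_lt (eSup_le_ofReal hbdd) ENNReal.ofReal_lt_top).ne
    have h2 := (abs_le_supNorm hne x).trans (hLψ n₀)
    have h3 := (abs_le.mp h2).2
    rw [hRdef]
    linarith [h3, mul_assoc C₀ D (ρ ^ n₀)]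
  -- pointwise bound for the q-iterate of ψ
  have hptw : ∀ x, (transfer (fun y => φ y + q * ψ y))^[n₀] ψ x ≤ E * (ψt + C₀ * R) := by
    intro x
    have he := iterate_transfer_eq φ ψ q n₀ ψ
    rw [he]
    have h1 : ∀ y : Space A, (fun y => Real.exp (q * birk ψ n₀ y) * ψ y) y
        ≤ (fun y => E * ψ y) y := by
      intro y
      simp only
      apply mul_le_mul_of_nonneg_right _ (hψ0 y)
      rw [hEdef]
      exact Real.exp_le_exp.mpr (mul_le_mul_of_nonneg_left (birk_le hψle n₀ y) hq0)
    have h2 := iterate_transfer_mono φ n₀ h1 x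
    rw [iterate_transfer_const_mul φ ψ E n₀] at h2
    exact h2.trans (mul_le_mul_of_nonneg_left (hLφψbd x) (by positivity))
  -- continuity of iterates and the dual identity
  have hcontIter : ∀ n : ℕ, Continuous ((transfer (fun y => φ y + q * ψ y))^[n] ψ) := by
    intro n
    induction n with
    | zero => exact hψc
    | succ n ih =>
      rw [Function.iterate_succ_apply']
      exact continuous_transfer hfc ih
  have hdual : ∀ n : ℕ, ∫ x, (transfer (fun y => φ y + q * ψ y))^[n] ψ x ∂(ν q)
      = lam q ^ n * ∫ x, ψ x ∂(ν q) := by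
    intro n
    induction n with
    | zero => simp
    | succ n ih =>
      rw [Function.iterate_succ_apply']
      have h := (hRPF q).2.2.1 ((transfer (fun y => φ y + q * ψ y))^[n] ψ) (hcontIter n)
      rw [h, ih, pow_succ]
      ring
  -- bound on ν q (ψ)
  have hνψ0 : 0 ≤ ∫ x, ψ x ∂(ν q) := integral_nonneg fun x => hψ0 x
  have hνub : lam q ^ n₀ * ∫ x, ψ x ∂(ν q) ≤ E * (ψt + C₀ * R) := by
    rw [← hdual n₀]
    calc ∫ x, (transfer (fun y => φ y + q * ψ y))^[n₀] ψ x ∂(ν q)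
        ≤ ∫ _x, E * (ψt + C₀ * R) ∂(ν q) :=
          integral_mono (integrable_of_continuous _ (hcontIter n₀))
            (integrable_const _) hptw
      _ = E * (ψt + C₀ * R) := by simp
  have hνψle : (∫ x, ψ x ∂(ν q)) ≤ E * (ψt + C₀ * R) := by
    nlinarith
  -- withDensity conversion
  have hwd : (∫ x, ψ x ∂((ν q).withDensity fun x => ENNReal.ofReal (hq q x)))
      = ∫ x, hq q x * ψ x ∂(ν q) := by
    have hmeas : Measurable fun x => (hq q x).toNNReal := hhqc.measurable.real_toNNReal
    have h1 : (fun x => ENNReal.ofReal (hq q x))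
        = fun x => ((hq q x).toNNReal : ℝ≥0∞) := rfl
    rw [h1, integral_withDensity_eq_integral_smul hmeas]
    apply integral_congr_ae
    refine Filter.Eventually.of_forall fun x => ?_
    simp [NNReal.smul_def, Real.coe_toNNReal _ (hqpos x).le]
  have hstep : (∫ x, hq q x * ψ x ∂(ν q)) ≤ (E + R) * ∫ x, ψ x ∂(ν q) := by
    rw [← integral_const_mul]
    exact integral_mono (integrable_of_continuous _ (hhqc.mul hψc))
      (integrable_of_continuous _ (continuous_const.mul hψc))
      (fun x => mul_le_mul_of_nonneg_right (hhqub x) (hψ0 x))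
  calc (∫ x, ψ x ∂((ν q).withDensity fun x => ENNReal.ofReal (hq q x)))
      = ∫ x, hq q x * ψ x ∂(ν q) := hwd
    _ ≤ (E + R) * ∫ x, ψ x ∂(ν q) := hstep
    _ ≤ (E + R) * (E * (ψt + C₀ * R)) :=
        mul_le_mul_of_nonneg_left hνψle (by linarith)
    _ < ψt + δ₀ / 2 := numeric E R C₀ δ₀ ψt hE1 hA hR0 hB hC₀2 hδ₀ hδψ hpc


end SFT
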